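/- Let d ≥ 1 be an integer, let σ₊ > 0, σ₋ > 0 and α ∈ (0,1) be real numbers. Let μ₊ be the product probability measure on ℝ^d with i.i.d. coordinates gaussianReal 1 σ₊², and μ₋ the product probability measure with i.i.d. coordinates gaussianReal (−1) σ₋². Define the misclassification risk R(w, b) = α·μ₊({x : ⟨w, x⟩ + b < 0}) + (1−α)·μ₋({x : ⟨w, x⟩ + b > 0}) for w ∈ ℝ^d, b ∈ ℝ. If (w*, b*) with w* ≠ 0 is a global minimizer of R, i.e. R(w*, b*) ≤ R(w, b) for all w ∈ ℝ^d and b ∈ ℝ, then all coordinates of w* are equal and their common value is positive. -/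

import Mathlib

open MeasureTheory ProbabilityTheory Real
open scoped NNReal ENNReal

lemma pdf_conv (m1 m2 : ℝ) (v1 v2 : ℝ≥0) (hv1 : v1 ≠ 0) (hv2 : v2 ≠ 0) (t : ℝ) :
    ∫ x : ℝ, gaussianPDFReal m1 v1 x * gaussianPDFReal m2 v2 (t - x)
      = gaussianPDFReal (m1 + m2) (v1 + v2) t := by
  have hv1' : (0:ℝ) < v1 := by positivity
  have hv2' : (0:ℝ) < v2 := by positivity
  set A : ℝ := (v1 + v2) / (2 * v1 * v2) with hA
  set B : ℝ := (m1 * v2 + (t - m2) * v1) / (v1 + v2) with hB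
  set C : ℝ := -(t - m1 - m2)^2 / (2 * (v1 + v2)) with hC
  have hA' : (0:ℝ) < A := by positivity
  have key : ∀ x : ℝ, gaussianPDFReal m1 v1 x * gaussianPDFReal m2 v2 (t - x)
      = ((√(2 * π * v1))⁻¹ * (√(2 * π * v2))⁻¹ * rexp C) * rexp (-A * (x - B)^2) := by
    intro x
    simp only [gaussianPDFReal]
    rw [show ∀ a b c d : ℝ, (a * b) * (c * d) = (a * c) * (b * d) from fun _ _ _ _ => by ring,
      mul_assoc ((√(2 * π * ↑v1))⁻¹ * (√(2 * π * ↑v2))⁻¹), ← Real.exp_add, ← Real.exp_add]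
    congr 2
    rw [hA, hB, hC]
    field_simp
    ring
  rw [MeasureTheory.integral_congr_ae (Filter.Eventually.of_forall key),
    MeasureTheory.integral_const_mul]
  have : ∫ x : ℝ, rexp (-A * (x - B)^2) = √(π / A) := by
    rw [integral_sub_right_eq_self (μ := volume) (fun x => rexp (-A * x^2)) B]
    exact integral_gaussian A
  rw [this, gaussianPDFReal]
  have hconst : (√(2 * π * (v1:ℝ)))⁻¹ * (√(2 * π * (v2:ℝ)))⁻¹ * √(π / A)
      = (√(2 * π * ((v1 + v2 : ℝ≥0) : ℝ)))⁻¹ := by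
    rw [← Real.sqrt_inv, ← Real.sqrt_inv, ← Real.sqrt_mul (by positivity),
      ← Real.sqrt_mul (by positivity), ← Real.sqrt_inv]
    congr 1
    rw [hA]
    push_cast
    have hπ : (0:ℝ) < π := pi_pos
    field_simp
  have hexp : rexp C = rexp (-(t - (m1 + m2))^2 / (2 * ((v1 + v2 : ℝ≥0) : ℝ))) := by
    rw [hC]; push_cast; ring_nf
  calc (√(2 * π * (v1:ℝ)))⁻¹ * (√(2 * π * (v2:ℝ)))⁻¹ * rexp C * √(π / A)
      = ((√(2 * π * (v1:ℝ)))⁻¹ * (√(2 * π * (v2:ℝ)))⁻¹ * √(π / A)) * rexp C := by ring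
    _ = _ := by rw [hconst, hexp]

lemma gaussian_conv (m1 m2 : ℝ) (v1 v2 : ℝ≥0) :
    Measure.map (fun p : ℝ × ℝ => p.1 + p.2)
        ((gaussianReal m1 v1).prod (gaussianReal m2 v2))
      = gaussianReal (m1 + m2) (v1 + v2) := by
  by_cases hv1 : v1 = 0
  · subst hv1
    rw [gaussianReal_zero_var, Measure.dirac_prod,
      Measure.map_map (by fun_prop) measurable_prodMk_left]
    have : ((fun p : ℝ × ℝ => p.1 + p.2) ∘ Prod.mk m1) = (m1 + ·) := rfl
    rw [this, gaussianReal_map_const_add, zero_add, add_comm m2 m1]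
  by_cases hv2 : v2 = 0
  · subst hv2
    rw [gaussianReal_zero_var, Measure.prod_dirac,
      Measure.map_map (by fun_prop) measurable_prodMk_right]
    have : ((fun p : ℝ × ℝ => p.1 + p.2) ∘ fun x => (x, m2)) = (· + m2) := rfl
    rw [this, gaussianReal_map_add_const, add_zero]
  · have hbdd : ∀ u x : ℝ, gaussianPDFReal m2 v2 (u - x) ≤ (√(2 * π * v2))⁻¹ := by
      intro u x
      rw [gaussianPDFReal]
      have h1 : rexp (-(u - x - m2)^2 / (2 * v2)) ≤ 1 := by
        rw [Real.exp_le_one_iff]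
        have : (0:ℝ) < 2 * v2 := by positivity
        exact div_nonpos_of_nonpos_of_nonneg (neg_nonpos.mpr (sq_nonneg _)) (by positivity)
      calc gaussianPDFReal m2 v2 (u - x) = (√(2 * π * v2))⁻¹ * rexp (-(u - x - m2)^2 / (2 * v2)) := rfl
        _ ≤ (√(2 * π * v2))⁻¹ * 1 := by
            gcongr
        _ = (√(2 * π * v2))⁻¹ := mul_one _
    ext s hs
    rw [Measure.map_apply (by fun_prop) hs,
      Measure.prod_apply (hs.preimage (by fun_prop))]
    have step1 : ∀ x : ℝ, gaussianReal m2 v2 (Prod.mk x ⁻¹' ((fun p : ℝ × ℝ => p.1 + p.2) ⁻¹' s))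
        = ∫⁻ u in s, gaussianPDF m2 v2 (u - x) := by
      intro x
      have hset : (Prod.mk x ⁻¹' ((fun p : ℝ × ℝ => p.1 + p.2) ⁻¹' s))
          = (fun y : ℝ => y + x) ⁻¹' s := by
        ext y; simp [add_comm]
      rw [hset, gaussianReal_apply _ hv2]
      have mp : MeasurePreserving (fun y : ℝ => y + x) volume volume :=
        measurePreserving_add_right volume x
      have := mp.setLIntegral_comp_preimage_emb (measurableEmbedding_addRight x)
        (fun u => gaussianPDF m2 v2 (u - x)) s
      simp only [add_sub_cancel_right] at this
      rw [← this]
    have hmeas : Measurable fun x : ℝ => ∫⁻ u in s, gaussianPDF m2 v2 (u - x) := by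
      apply Measurable.lintegral_prod_right'
        (f := fun q : ℝ × ℝ => gaussianPDF m2 v2 (q.2 - q.1))
      exact (measurable_gaussianPDF m2 v2).comp (measurable_snd.sub measurable_fst)
    simp_rw [step1]
    rw [gaussianReal_of_var_ne_zero _ hv1,
      lintegral_withDensity_eq_lintegral_mul _ (measurable_gaussianPDF _ _)
        hmeas]
    have hpm : Measurable fun q : ℝ × ℝ => gaussianPDF m1 v1 q.2 * gaussianPDF m2 v2 (q.1 - q.2) := by
      exact ((measurable_gaussianPDF m1 v1).comp measurable_snd).mul
        ((measurable_gaussianPDF m2 v2).comp (measurable_fst.sub measurable_snd))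
    calc ∫⁻ x, gaussianPDF m1 v1 x * ∫⁻ u in s, gaussianPDF m2 v2 (u - x) ∂volume
        = ∫⁻ x, ∫⁻ u in s, gaussianPDF m1 v1 x * gaussianPDF m2 v2 (u - x) ∂volume := by
          congr 1; ext x; rw [lintegral_const_mul]
          exact (measurable_gaussianPDF m2 v2).comp (measurable_id.sub_const x)
      _ = ∫⁻ u in s, ∫⁻ x, gaussianPDF m1 v1 x * gaussianPDF m2 v2 (u - x) ∂volume := by
          rw [lintegral_lintegral_swap]
          exact (hpm.comp measurable_swap).aemeasurable
      _ = ∫⁻ u in s, gaussianPDF (m1 + m2) (v1 + v2) u := by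
          apply setLIntegral_congr_fun hs
          intro u _
          have hint : Integrable (fun x => gaussianPDFReal m1 v1 x * gaussianPDFReal m2 v2 (u - x)) := by
            have := (integrable_gaussianPDFReal m1 v1).bdd_mul
              (((measurable_gaussianPDFReal m2 v2).comp
                (measurable_const.sub measurable_id)).aestronglyMeasurable)
              (c := (√(2 * π * v2))⁻¹) (Filter.Eventually.of_forall fun x => by
                show ‖gaussianPDFReal m2 v2 (u - x)‖ ≤ _
                rw [norm_of_nonneg (gaussianPDFReal_nonneg _ _ _)]; exact hbdd u x)
            have heq : (fun x => (gaussianPDFReal m2 v2 ∘ fun a => u - id a) x * gaussianPDFReal m1 v1 x)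
                = fun x => gaussianPDFReal m1 v1 x * gaussianPDFReal m2 v2 (u - x) := by
              ext x; simp [mul_comm]
            rw [← heq]; exact this
          calc ∫⁻ x, gaussianPDF m1 v1 x * gaussianPDF m2 v2 (u - x) ∂volume
              = ∫⁻ x, ENNReal.ofReal (gaussianPDFReal m1 v1 x * gaussianPDFReal m2 v2 (u - x)) ∂volume := by
                congr 1; ext x
                rw [gaussianPDF, gaussianPDF, ← ENNReal.ofReal_mul (gaussianPDFReal_nonneg _ _ _)]
            _ = ENNReal.ofReal (∫ x, gaussianPDFReal m1 v1 x * gaussianPDFReal m2 v2 (u - x)) := by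
                rw [← ofReal_integral_eq_lintegral_ofReal hint
                  (Filter.Eventually.of_forall fun x =>
                    mul_nonneg (gaussianPDFReal_nonneg _ _ _) (gaussianPDFReal_nonneg _ _ _))]
            _ = gaussianPDF (m1 + m2) (v1 + v2) u := by
                rw [pdf_conv m1 m2 v1 v2 hv1 hv2 u, gaussianPDF]
      _ = gaussianReal (m1 + m2) (v1 + v2) s := (gaussianReal_apply _ (by simp [hv1]) s).symm

lemma pi_gaussian_map_sum (n : ℕ) (m : ℝ) (v : ℝ≥0) (w : Fin n → ℝ) :
    Measure.map (fun x : Fin n → ℝ => ∑ i, w i * x i)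
        (Measure.pi fun _ : Fin n => gaussianReal m v)
      = gaussianReal ((∑ i, w i) * m)
          ((⟨∑ i, (w i)^2, by positivity⟩ * v : ℝ≥0)) := by
  induction n with
  | zero =>
      have h0 : (fun x : Fin 0 → ℝ => ∑ i, w i * x i) = fun _ => (0:ℝ) := by
        ext x; simp
      have hv : ((⟨∑ i : Fin 0, (w i)^2, by positivity⟩ * v : ℝ≥0)) = 0 := by
        apply NNReal.eq; show (∑ i : Fin 0, (w i)^2) * (v:ℝ) = 0; simp
      rw [h0, Measure.map_const, hv]
      simp
  | succ n ih =>
      have hmp := measurePreserving_piFinSuccAbove (fun _ : Fin (n+1) => gaussianReal m v) 0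
      have hpi : (Measure.pi fun _ : Fin (n+1) => gaussianReal m v)
          = Measure.map (MeasurableEquiv.piFinSuccAbove (fun _ : Fin (n+1) => ℝ) 0).symm
              ((gaussianReal m v).prod (Measure.pi fun _ : Fin n => gaussianReal m v)) := by
        rw [← hmp.map_eq]
        rw [Measure.map_map (MeasurableEquiv.measurable _) (MeasurableEquiv.measurable _)]
        simp
      rw [hpi, Measure.map_map (by fun_prop) (MeasurableEquiv.measurable _)]
      have hfun : ((fun x : Fin (n+1) → ℝ => ∑ i, w i * x i)
            ∘ (MeasurableEquiv.piFinSuccAbove (fun _ : Fin (n+1) => ℝ) 0).symm)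
          = (fun p : ℝ × ℝ => p.1 + p.2)
            ∘ (Prod.map (fun a : ℝ => w 0 * a) (fun y : Fin n → ℝ => ∑ j, w j.succ * y j)) := by
        ext p
        simp [MeasurableEquiv.piFinSuccAbove, Fin.insertNthEquiv, Fin.sum_univ_succ,
          Finset.mul_sum]
      rw [hfun, ← Measure.map_map (by fun_prop) (by fun_prop),
        ← Measure.map_prod_map _ _ (by fun_prop) (by fun_prop),
        gaussianReal_map_const_mul, ih, gaussian_conv]
      congr 1
      · rw [Fin.sum_univ_succ]; ring
      · ext
        push_cast
        show w 0 ^ 2 * (v:ℝ) + (∑ i : Fin n, w i.succ ^ 2) * (v:ℝ) = (∑ i, w i ^ 2) * (v:ℝ)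
        rw [Fin.sum_univ_succ, add_mul]

lemma gaussian_pos (m : ℝ) {v : ℝ≥0} (hv : v ≠ 0) {s : Set ℝ} (hs : volume s ≠ 0) :
    0 < gaussianReal m v s := by
  by_contra h
  push_neg at h
  exact hs ((gaussianReal_absolutelyContinuous' m hv) (le_antisymm h zero_le))

lemma gaussian_Iio_shift (m : ℝ) (v : ℝ≥0) (c : ℝ) :
    gaussianReal m v (Set.Iio c) = gaussianReal 0 v (Set.Iio (c - m)) := by
  have : gaussianReal m v = (gaussianReal 0 v).map (· + m) := by
    rw [gaussianReal_map_add_const, zero_add]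
  rw [this, Measure.map_apply (by fun_prop) measurableSet_Iio]
  congr 1
  ext x
  simp [lt_sub_iff_add_lt]

lemma gaussian_Ioi_shift (m : ℝ) (v : ℝ≥0) (c : ℝ) :
    gaussianReal m v (Set.Ioi c) = gaussianReal 0 v (Set.Ioi (c - m)) := by
  have : gaussianReal m v = (gaussianReal 0 v).map (· + m) := by
    rw [gaussianReal_map_add_const, zero_add]
  rw [this, Measure.map_apply (by fun_prop) measurableSet_Ioi]
  congr 1
  ext x
  simp [sub_lt_iff_lt_add]

lemma gaussian_Iio_strict {v : ℝ≥0} (hv : v ≠ 0) {M M' : ℝ} (h : M < M') (c : ℝ) :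
    gaussianReal M' v (Set.Iio c) < gaussianReal M v (Set.Iio c) := by
  rw [gaussian_Iio_shift M' v c, gaussian_Iio_shift M v c]
  have hsub : Set.Iio (c - M) = Set.Iio (c - M') ∪ Set.Ico (c - M') (c - M) := by
    rw [Set.Iio_union_Ico_eq_Iio (by linarith)]
  rw [hsub, measure_union (by
      intro t hts hts' z hz
      have h1 := hts hz
      have h2 := hts' hz
      simp only [Set.mem_Iio, Set.mem_Ico] at h1 h2
      exact absurd h2.1 (not_le.mpr h1)) measurableSet_Ico]
  have hpos : 0 < gaussianReal 0 v (Set.Ico (c - M') (c - M)) := by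
    apply gaussian_pos _ hv
    rw [Real.volume_Ico]
    simp only [ne_eq, ENNReal.ofReal_eq_zero, not_le]
    linarith
  have hfin : gaussianReal 0 v (Set.Iio (c - M')) ≠ ⊤ := measure_ne_top _ _
  exact ENNReal.lt_add_right hfin hpos.ne'

lemma gaussian_Ioi_strict {v : ℝ≥0} (hv : v ≠ 0) {M M' : ℝ} (h : M < M') (c : ℝ) :
    gaussianReal M v (Set.Ioi c) < gaussianReal M' v (Set.Ioi c) := by
  rw [gaussian_Ioi_shift M v c, gaussian_Ioi_shift M' v c]
  have hsub : Set.Ioi (c - M') = Set.Ioc (c - M') (c - M) ∪ Set.Ioi (c - M) := by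
    rw [Set.Ioc_union_Ioi_eq_Ioi (by linarith)]
  rw [hsub, measure_union (by
      intro t hts hts' z hz
      have h1 := hts hz
      have h2 := hts' hz
      simp only [Set.mem_Ioi, Set.mem_Ioc] at h1 h2
      exact absurd h1.2 (not_le.mpr h2)) measurableSet_Ioi]
  have hpos : 0 < gaussianReal 0 v (Set.Ioc (c - M') (c - M)) := by
    apply gaussian_pos _ hv
    rw [Real.volume_Ioc]
    simp only [ne_eq, ENNReal.ofReal_eq_zero, not_le]
    linarith
  have hfin : gaussianReal 0 v (Set.Ioi (c - M)) ≠ ⊤ := measure_ne_top _ _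
  calc gaussianReal 0 v (Set.Ioi (c - M))
      < gaussianReal 0 v (Set.Ioi (c - M)) + gaussianReal 0 v (Set.Ioc (c - M') (c - M)) :=
        ENNReal.lt_add_right hfin hpos.ne'
    _ = _ := by rw [add_comm]

/-- Any nonzero global minimizer of the misclassification risk on the two-class spherical
Gaussian mixture has all weight coordinates equal and positive. -/
theorem optimal_classifier_equal_positive_weights
    (d : ℕ) (hd : 1 ≤ d)
    (σp σm α : ℝ) (hσp : 0 < σp) (hσm : 0 < σm) (hα : α ∈ Set.Ioo (0 : ℝ) 1)
    (R : (Fin d → ℝ) → ℝ → ℝ)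
    (hR : ∀ w b, R w b =
      α * ((Measure.pi fun _ : Fin d => gaussianReal 1 ⟨σp ^ 2, sq_nonneg σp⟩)
            {x : Fin d → ℝ | (∑ i, w i * x i) + b < 0}).toReal
        + (1 - α) * ((Measure.pi fun _ : Fin d => gaussianReal (-1) ⟨σm ^ 2, sq_nonneg σm⟩)
            {x : Fin d → ℝ | (∑ i, w i * x i) + b > 0}).toReal)
    (wstar : Fin d → ℝ) (bstar : ℝ) (hwstar : wstar ≠ 0)
    (hmin : ∀ (w : Fin d → ℝ) (b : ℝ), R wstar bstar ≤ R w b) :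
    ∃ c : ℝ, 0 < c ∧ ∀ i, wstar i = c := by
  obtain ⟨hα0, hα1⟩ := hα
  set vp : ℝ≥0 := ⟨σp ^ 2, sq_nonneg σp⟩ with hvp_def
  set vm : ℝ≥0 := ⟨σm ^ 2, sq_nonneg σm⟩ with hvm_def
  have hvp : vp ≠ 0 := by
    intro h
    have : σp ^ 2 = 0 := congrArg NNReal.toReal h
    nlinarith
  have hvm : vm ≠ 0 := by
    intro h
    have : σm ^ 2 = 0 := congrArg NNReal.toReal h
    nlinarith
  -- risk formula
  have hRw : ∀ (w : Fin d → ℝ) (b : ℝ), R w b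
      = α * (gaussianReal (∑ i, w i) ((⟨∑ i, (w i)^2, by positivity⟩ * vp : ℝ≥0))
          (Set.Iio (-b))).toReal
        + (1 - α) * (gaussianReal (-∑ i, w i) ((⟨∑ i, (w i)^2, by positivity⟩ * vm : ℝ≥0))
          (Set.Ioi (-b))).toReal := by
    intro w b
    have hf : Measurable fun x : Fin d → ℝ => ∑ i, w i * x i := by fun_prop
    have hset1 : {x : Fin d → ℝ | (∑ i, w i * x i) + b < 0}
        = (fun x : Fin d → ℝ => ∑ i, w i * x i) ⁻¹' (Set.Iio (-b)) := by
      ext x; simp only [Set.mem_setOf_eq, Set.mem_preimage, Set.mem_Iio]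
      constructor <;> intro <;> linarith
    have hset2 : {x : Fin d → ℝ | (∑ i, w i * x i) + b > 0}
        = (fun x : Fin d → ℝ => ∑ i, w i * x i) ⁻¹' (Set.Ioi (-b)) := by
      ext x; simp only [Set.mem_setOf_eq, Set.mem_preimage, Set.mem_Ioi]
      constructor <;> intro <;> linarith
    rw [hR, hset1, hset2,
      ← Measure.map_apply hf measurableSet_Iio,
      ← Measure.map_apply hf measurableSet_Ioi,
      pi_gaussian_map_sum d 1 vp w, pi_gaussian_map_sum d (-1) vm w,
      mul_one, mul_neg_one]
  -- setup quantities
  set S : ℝ := ∑ i, wstar i with hS_def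
  set Q : ℝ := ∑ i, (wstar i)^2 with hQ_def
  have hQpos : 0 < Q := by
    rcases Function.ne_iff.mp hwstar with ⟨i, hi⟩
    have : (0:ℝ) < (wstar i)^2 := by
      have hi' : wstar i ≠ 0 := hi
      positivity
    exact Finset.sum_pos' (fun j _ => sq_nonneg _) ⟨i, Finset.mem_univ i, this⟩
  have hdpos : (0:ℝ) < d := by exact_mod_cast hd
  set c0 : ℝ := √(Q / d) with hc0_def
  have hc0 : 0 < c0 := Real.sqrt_pos.mpr (by positivity)
  set w' : Fin d → ℝ := fun _ => c0 with hw'_def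
  have hsum' : ∑ i, w' i = d * c0 := by
    simp [hw'_def, Finset.sum_const, mul_comm]
  have hsq' : ∑ i, (w' i)^2 = Q := by
    simp only [hw'_def, Finset.sum_const, Finset.card_univ, Fintype.card_fin, nsmul_eq_mul]
    rw [hc0_def, Real.sq_sqrt (by positivity)]
    field_simp
  set S' : ℝ := (d:ℝ) * c0 with hS'_def
  have hS'pos : 0 < S' := by positivity
  -- the key dichotomy
  by_cases hP : ∃ c : ℝ, 0 < c ∧ ∀ i, wstar i = c
  · exact hP
  exfalso
  have hSlt : S < S' := by
    by_cases heq : ∀ i, wstar i = wstar ⟨0, hd⟩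
    · -- all equal, to a nonpositive value
      set c := wstar ⟨0, hd⟩ with hc_def
      have hc0' : c ≠ 0 := by
        intro h
        apply hwstar
        ext i; rw [heq i, h]; rfl
      have hcneg : c < 0 := by
        rcases lt_or_gt_of_ne hc0' with h | h
        · exact h
        · exact absurd ⟨c, h, heq⟩ hP
      have : S = d * c := by
        rw [hS_def]
        simp only [Finset.sum_congr rfl (fun i _ => heq i), Finset.sum_const,
          Finset.card_univ, Fintype.card_fin, nsmul_eq_mul]
      rw [this]
      have : (d:ℝ) * c < 0 := by
        apply mul_neg_of_pos_of_neg hdpos hcneg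
      linarith
    · -- not all equal: Cauchy-Schwarz is strict
      push_neg at heq
      obtain ⟨j, hj⟩ := heq
      have hdq : S^2 < d * Q := by
        have expand : ∀ a b : ℝ, (a - b)^2 = a^2 - 2*(a*b) + b^2 := fun a b => by ring
        have hdouble : ∑ i, ∑ k, (wstar i - wstar k)^2 = 2*((d:ℝ)*Q) - 2*(S*S) := by
          simp_rw [expand, Finset.sum_add_distrib, Finset.sum_sub_distrib,
            ← Finset.mul_sum, ← Finset.sum_mul, Finset.sum_const, Finset.card_univ,
            Fintype.card_fin, nsmul_eq_mul]
          rw [← hS_def, ← hQ_def, ← Finset.mul_sum, ← hQ_def]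
          ring
        have hpos : 0 < ∑ i, ∑ k, (wstar i - wstar k)^2 := by
          apply Finset.sum_pos'
          · intro i _
            exact Finset.sum_nonneg fun k _ => sq_nonneg _
          · refine ⟨j, Finset.mem_univ j, ?_⟩
            apply Finset.sum_pos'
            · intro k _; exact sq_nonneg _
            · refine ⟨⟨0, hd⟩, Finset.mem_univ _, ?_⟩
              have := sub_ne_zero.mpr hj
              positivity
        nlinarith
      rcases le_or_gt S 0 with h | h
      · linarith
      · have hS'sq : S'^2 = d * Q := by
          rw [hS'_def, mul_pow, hc0_def, Real.sq_sqrt (by positivity)]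
          field_simp
        nlinarith
  -- strict risk comparison
  have hVp : ((⟨∑ i, (wstar i)^2, by positivity⟩ * vp : ℝ≥0)) ≠ 0 := by
    apply mul_ne_zero _ hvp
    intro h
    have : Q = 0 := congrArg NNReal.toReal h
    linarith
  have hVm : ((⟨∑ i, (wstar i)^2, by positivity⟩ * vm : ℝ≥0)) ≠ 0 := by
    apply mul_ne_zero _ hvm
    intro h
    have : Q = 0 := congrArg NNReal.toReal h
    linarith
  have hVeq : (⟨∑ i, (w' i)^2, by positivity⟩ : ℝ≥0) = ⟨∑ i, (wstar i)^2, by positivity⟩ := by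
    ext; exact hsq'
  have hlt : R w' bstar < R wstar bstar := by
    rw [hRw, hRw, hsum', hVeq]
    have h1 : gaussianReal S' ((⟨∑ i, (wstar i)^2, by positivity⟩ * vp : ℝ≥0)) (Set.Iio (-bstar))
        < gaussianReal S ((⟨∑ i, (wstar i)^2, by positivity⟩ * vp : ℝ≥0)) (Set.Iio (-bstar)) :=
      gaussian_Iio_strict hVp hSlt _
    have h2 : gaussianReal (-S') ((⟨∑ i, (wstar i)^2, by positivity⟩ * vm : ℝ≥0)) (Set.Ioi (-bstar))
        < gaussianReal (-S) ((⟨∑ i, (wstar i)^2, by positivity⟩ * vm : ℝ≥0)) (Set.Ioi (-bstar)) :=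
      gaussian_Ioi_strict hVm (by linarith) _
    have t1 := ENNReal.toReal_lt_toReal (measure_ne_top _ _) (measure_ne_top _ _) |>.mpr h1
    have t2 := ENNReal.toReal_lt_toReal (measure_ne_top _ _) (measure_ne_top _ _) |>.mpr h2
    have := mul_lt_mul_of_pos_left t1 hα0
    have := mul_lt_mul_of_pos_left t2 (by linarith : (0:ℝ) < 1 - α)
    exact add_lt_add (mul_lt_mul_of_pos_left t1 hα0)
      (mul_lt_mul_of_pos_left t2 (by linarith : (0:ℝ) < 1 - α))
  exact absurd (hmin w' bstar) (not_le.mpr hlt)
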